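/- Let L be a first-order language, θ a regular cardinal, δ a limit ordinal, and (M_i : i < δ) a chain of L-structures that is increasing with respect to ≺⊗_θ. Then for every i < δ, M_i ≺⊗_θ ⋃_{j<δ} M_j. -/

import Mathlib

open FirstOrder

universe u v

variable {L : FirstOrder.Language.{u, v}} {M : Type w} [L.Structure M]

/-- Two tuples `b`, `b'` from `M` realize the same type over `Z`. -/
def SameTypeOver (Z : Set M) {m : ℕ} (b b' : Fin m → M) : Prop :=
  ∀ (k : ℕ) (c : Fin k → M), (∀ i, c i ∈ Z) →
    ∀ ψ : L.Formula (Fin m ⊕ Fin k),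
      ψ.Realize (Sum.elim b c) ↔ ψ.Realize (Sum.elim b' c)

/-- `X/Y` does not split over `Z`. -/
def DoesNotSplitOver (X Y Z : Set M) : Prop :=
  ∀ (n m : ℕ) (φ : L.Formula (Fin n ⊕ Fin m)) (a : Fin n → M), (∀ i, a i ∈ X) →
    ∀ b b' : Fin m → M, (∀ i, b i ∈ Y) → (∀ i, b' i ∈ Y) →
      SameTypeOver (L := L) Z b b' →
      (φ.Realize (Sum.elim a b) ↔ φ.Realize (Sum.elim a b'))

/-- `S` is the carrier of an elementary substructure of the ambient structure `M`.
Working inside a fixed ambient structure, a pair of such carriers `S₁ ⊆ S₂` represents a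
pair of structures `M₁ ≼ M₂`. -/
def IsElementaryCarrier (S : Set M) : Prop :=
  ∃ E : L.ElementarySubstructure M, (E : Set M) = S

/-- `M₁ ≺⊗_θ M₂` (for carriers `S₁ ⊆ S₂` of elementary substructures of the ambient
structure): for every subset `X` of `M₂` of cardinality `< θ` there is a subset `Y` of `M₁`
of cardinality `< θ` such that `X/M₁` does not split over `Y`. -/
def PrecOtimes (θ : Cardinal.{w}) (S₁ S₂ : Set M) : Prop :=
  S₁ ⊆ S₂ ∧ ∀ X : Set M, X ⊆ S₂ → Cardinal.mk X < θ →
    ∃ Y : Set M, Y ⊆ S₁ ∧ Cardinal.mk Y < θ ∧ DoesNotSplitOver (L := L) X S₁ Y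

/-- If `θ` is regular, `δ` is a limit ordinal, and `(M_i : i < δ)` is a `≺⊗_θ`-increasing
chain of (carriers of) elementary substructures of the ambient structure, then for every
`i < δ`, `M_i ≺⊗_θ ⋃_{j<δ} M_j`. -/
theorem precOtimes_iUnion_of_chain (θ : Cardinal.{w}) (hθ : θ.IsRegular)
    (δ : Ordinal.{w}) (hδ : Order.IsSuccLimit δ) (S : Ordinal.{w} → Set M)
    (helem : ∀ i < δ, IsElementaryCarrier (L := L) (S i))
    (hchain : ∀ i j : Ordinal.{w}, i ≤ j → j < δ → PrecOtimes (L := L) θ (S i) (S j))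
    (i : Ordinal.{w}) (hi : i < δ) :
    PrecOtimes (L := L) θ (S i) (⋃ j ∈ Set.Iio δ, S j) := by
  classical
  have hmono : ∀ j j' : Ordinal.{w}, j ≤ j' → j' < δ → S j ⊆ S j' :=
    fun j j' h h' => (hchain j j' h h').1
  constructor
  · intro x hx
    exact Set.mem_biUnion hi hx
  · intro X hX hXcard
    -- choose for each x ∈ X an index j with x ∈ S j
    have hj : ∀ x : X, ∃ j : Ordinal.{w}, j < δ ∧ (x : M) ∈ S j := by
      intro x
      have := hX x.2
      simp only [Set.mem_iUnion, Set.mem_Iio] at this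
      obtain ⟨j, hj1, hj2⟩ := this
      exact ⟨j, hj1, hj2⟩
    -- f x : an index ≥ i, < δ, with x ∈ S (f x)
    let f : X → Ordinal.{w} := fun x => max i (Classical.choose (hj x))
    have hfδ : ∀ x : X, f x < δ := fun x =>
      max_lt hi (Classical.choose_spec (hj x)).1
    have hif : ∀ x : X, i ≤ f x := fun x => le_max_left _ _
    have hxf : ∀ x : X, (x : M) ∈ S (f x) := fun x =>
      hmono _ _ (le_max_right _ _) (hfδ x) (Classical.choose_spec (hj x)).2
    -- for each x, get a small Y x over which X ∩ S (f x) / S i does not split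
    have hY : ∀ x : X, ∃ Y : Set M, Y ⊆ S i ∧ Cardinal.mk Y < θ ∧
        DoesNotSplitOver (L := L) (X ∩ S (f x)) (S i) Y := by
      intro x
      exact (hchain i (f x) (hif x) (hfδ x)).2 (X ∩ S (f x)) Set.inter_subset_right
        (lt_of_le_of_lt (Cardinal.mk_le_mk_of_subset Set.inter_subset_left) hXcard)
    choose Y hYsub hYcard hYsplit using hY
    refine ⟨⋃ x : X, Y x, Set.iUnion_subset hYsub, ?_, ?_⟩
    · exact lt_of_le_of_lt Cardinal.mk_iUnion_le_sum_mk
        (Cardinal.sum_lt_of_isRegular hθ hXcard hYcard)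
    · intro n m φ a ha b b' hb hb' hst
      match n, φ, a, ha with
      | 0, φ, a, ha =>
        -- no parameters from X: use SameTypeOver directly
        let g : Fin 0 ⊕ Fin m → Fin m ⊕ Fin 0 := Sum.elim Fin.elim0 Sum.inl
        have h := hst 0 Fin.elim0 (fun k => k.elim0) (φ.relabel g)
        rw [FirstOrder.Language.Formula.realize_relabel,
            FirstOrder.Language.Formula.realize_relabel] at h
        have e1 : Sum.elim b Fin.elim0 ∘ g = Sum.elim a b := by
          funext z; cases z with
          | inl z => exact z.elim0
          | inr z => rfl
        have e2 : Sum.elim b' Fin.elim0 ∘ g = Sum.elim a b' := by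
          funext z; cases z with
          | inl z => exact z.elim0
          | inr z => rfl
        rw [e1, e2] at h
        exact h
      | (n + 1), φ, a, ha =>
        -- find a single index dominating all parameters
        let xa : Fin (n + 1) → X := fun k => ⟨a k, ha k⟩
        obtain ⟨k0, hk0⟩ := Finite.exists_max (fun k => f (xa k))
        have haX : ∀ k, a k ∈ X ∩ S (f (xa k0)) := by
          intro k
          exact ⟨ha k, hmono _ _ (hk0 k) (hfδ _) (hxf (xa k))⟩
        refine hYsplit (xa k0) (n + 1) m φ a haX b b' hb hb' ?_
        intro k c hc ψ
        exact hst k c (fun l => Set.mem_iUnion.2 ⟨xa k0, hc l⟩) ψ
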